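/- Let (x, p) be a solution to the Eisenberg–Gale program with budgets e such that x is envy-free, and let S be a weakly connected component of I(x) on which all budgets e_i are equal. Then there exists a fractional allocation x' with x'_i = x_i for every agent i ∉ S such that: (x', p) is a solution to the Eisenberg–Gale program with the same budgets e; x' is envy-free; every edge of I(x') is an edge of I(x) (no new indifference edges are created); the restriction of I(x') to S is clique acyclic; and any two agents of S lying in the same clique of the witnessing partition have identical bundles under x'. -/

import Mathlib

open Finset

/-- `X` is a fractional allocation of `m` divisible items to `n` agents. -/
def IsAlloc {n m : ℕ} (X : Fin n → Fin m → ℝ) : Prop :=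
  (∀ i j, X i j ∈ Set.Icc (0 : ℝ) 1) ∧ ∀ j, ∑ i, X i j = 1

/-- Agent `i`'s additive value for a fractional bundle `y`. -/
def val {n m : ℕ} (v : Fin n → Fin m → ℝ) (i : Fin n) (y : Fin m → ℝ) : ℝ :=
  ∑ k, v i k * y k

/-- `X` is envy-free under valuations `v`. -/
def EnvyFree {n m : ℕ} (v : Fin n → Fin m → ℝ) (X : Fin n → Fin m → ℝ) : Prop :=
  ∀ i j, val v i (X j) ≤ val v i (X i)

/-- The indifference graph `I(X)` has an edge from `i` to `j` iff `i ≠ j` and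
`i` is indifferent between its own bundle and `j`'s bundle. -/
def IndifEdge {n m : ℕ} (v : Fin n → Fin m → ℝ) (X : Fin n → Fin m → ℝ)
    (i j : Fin n) : Prop :=
  i ≠ j ∧ val v i (X i) = val v i (X j)

/-- `(x, p)` is a solution to the Eisenberg–Gale program with budgets `e`:
`e` and `p` are positive, `x` is a fractional allocation giving every agent positive
utility, and the KKT conditions hold. -/
def EGSolution {n m : ℕ} (v : Fin n → Fin m → ℝ) (e : Fin n → ℝ) (p : Fin m → ℝ)
    (x : Fin n → Fin m → ℝ) : Prop :=
  (∀ i, 0 < e i) ∧ (∀ j, 0 < p j) ∧ IsAlloc x ∧ (∀ i, 0 < val v i (x i)) ∧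
  (∀ j, ∑ i, x i j = 1) ∧
  (∀ i j, v i j / p j ≤ val v i (x i) / e i) ∧
  (∀ i j, 0 < x i j → v i j / p j = val v i (x i) / e i)

/-- One step in the underlying undirected graph of `I(X)`. -/
def UndirStep {n m : ℕ} (v : Fin n → Fin m → ℝ) (X : Fin n → Fin m → ℝ)
    (i j : Fin n) : Prop :=
  IndifEdge v X i j ∨ IndifEdge v X j i

/-- `S` is a weakly connected component of the indifference graph `I(X)`:
the set of vertices reachable from some vertex in the underlying undirected graph. -/
def IsWCC {n m : ℕ} (v : Fin n → Fin m → ℝ) (X : Fin n → Fin m → ℝ)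
    (S : Set (Fin n)) : Prop :=
  ∃ i₀, S = {j | Relation.ReflTransGen (UndirStep v X) i₀ j}

/-- The directed graph with edge relation `E`, restricted to the vertex set `S`, is
clique acyclic with witnessing partition (labelling) `c`: agents of `S` with the same
label form a clique, and every directed cycle inside `S` stays within one label
class. -/
def CliqueAcyclicOn {n : ℕ} (E : Fin n → Fin n → Prop) (S : Set (Fin n))
    (c : Fin n → ℕ) : Prop :=
  (∀ i ∈ S, ∀ j ∈ S, i ≠ j → c i = c j → E i j) ∧
  (∀ (k : ℕ) (cyc : Fin (k + 1) → Fin n), (∀ t, cyc t ∈ S) →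
    (∀ t, E (cyc t) (cyc (t + 1))) → ∀ t t', c (cyc t) = c (cyc t'))

section EGAux

open scoped Classical

variable {n m : ℕ} (v : Fin n → Fin m → ℝ) (x : Fin n → Fin m → ℝ)

def egReach (i j : Fin n) : Prop := Relation.ReflTransGen (IndifEdge v x) i j

def egScc (i j : Fin n) : Prop := egReach v x i j ∧ egReach v x j i

def egNbK (i l : Fin n) : Prop := egScc v x i l ∧ (IndifEdge v x i l ∨ l = i)

def egSim (i j : Fin n) : Prop := egScc v x i j ∧ ∀ l, egNbK v x i l ↔ egNbK v x j l

lemma val_apply (i : Fin n) (y : Fin m → ℝ) : val v i y = ∑ k, v i k * y k := rfl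

variable {v x}

lemma egScc_refl (i : Fin n) : egScc v x i i := ⟨.refl, .refl⟩

lemma egScc_symm {i j : Fin n} (h : egScc v x i j) : egScc v x j i := ⟨h.2, h.1⟩

lemma egScc_trans {i j l : Fin n} (h : egScc v x i j) (h' : egScc v x j l) :
    egScc v x i l := ⟨h.1.trans h'.1, h'.2.trans h.2⟩

lemma egNbK_refl (i : Fin n) : egNbK v x i i := ⟨egScc_refl i, Or.inr rfl⟩

lemma egSim_refl (i : Fin n) : egSim v x i i := ⟨egScc_refl i, fun _ => Iff.rfl⟩

lemma egSim_symm {i j : Fin n} (h : egSim v x i j) : egSim v x j i :=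
  ⟨egScc_symm h.1, fun l => (h.2 l).symm⟩

lemma egSim_trans {i j l : Fin n} (h : egSim v x i j) (h' : egSim v x j l) :
    egSim v x i l := ⟨egScc_trans h.1 h'.1, fun a => (h.2 a).trans (h'.2 a)⟩

lemma egExistsBij {i l : Fin n} (hE : IndifEdge v x i l) (hscc : egScc v x i l) :
    ∃ f : Fin n → Fin n, Function.Bijective f ∧ f i = l ∧ ∀ a, egNbK v x a (f a) := by
  classical
  set T : Fin n → Finset (Fin n) :=
    fun a => if a = i then {l} else Finset.univ.filter (egNbK v x a) with hT
  have hTself : ∀ a, a ≠ i → a ∈ T a := by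
    intro a ha
    simp [hT, ha, egNbK_refl a]
  have hall : ∀ A : Finset (Fin n), A.card ≤ (A.biUnion T).card := by
    intro A
    by_cases hiA : i ∈ A
    · by_cases hlA : l ∈ A.erase i
      · by_contra hlt
        push_neg at hlt
        have hsub : A.erase i ⊆ A.biUnion T := by
          intro a ha
          exact Finset.mem_biUnion.mpr ⟨a, Finset.mem_of_mem_erase ha,
            hTself a (Finset.ne_of_mem_erase ha)⟩
        have hle : (A.biUnion T).card ≤ (A.erase i).card := by
          rw [Finset.card_erase_of_mem hiA]
          omega
        have hEq : A.erase i = A.biUnion T :=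
          Finset.eq_of_subset_of_card_le hsub hle
        -- key induction: every vertex on a path from l to i lies in A.erase i
        have key : ∀ w, egReach v x l w → egReach v x w i → w ∈ A.erase i := by
          intro w hw
          induction hw with
          | refl => intro _; exact hlA
          | @tail b c hlb hbc ih =>
            intro hci
            have hbi : egReach v x b i := Relation.ReflTransGen.head hbc hci
            have hb : b ∈ A.erase i := ih hbi
            have hsccbc : egScc v x b c :=
              ⟨Relation.ReflTransGen.single hbc,
               (hci.trans (Relation.ReflTransGen.single hE)).trans hlb⟩
            have hcT : c ∈ T b := by
              simp only [hT, if_neg (Finset.ne_of_mem_erase hb), Finset.mem_filter,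
                Finset.mem_univ, true_and]
              exact ⟨hsccbc, Or.inl hbc⟩
            have : c ∈ A.biUnion T :=
              Finset.mem_biUnion.mpr ⟨b, Finset.mem_of_mem_erase hb, hcT⟩
            rwa [← hEq] at this
        have := key i hscc.2 Relation.ReflTransGen.refl
        exact (Finset.notMem_erase i A) this
      · have hsub : insert l (A.erase i) ⊆ A.biUnion T := by
          intro a ha
          rcases Finset.mem_insert.mp ha with rfl | ha
          · exact Finset.mem_biUnion.mpr ⟨i, hiA, by simp [hT]⟩
          · exact Finset.mem_biUnion.mpr ⟨a, Finset.mem_of_mem_erase ha,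
              hTself a (Finset.ne_of_mem_erase ha)⟩
        have h1 : (insert l (A.erase i)).card = A.card := by
          rw [Finset.card_insert_of_notMem hlA, Finset.card_erase_of_mem hiA]
          have : 1 ≤ A.card := Finset.card_pos.mpr ⟨i, hiA⟩
          omega
        calc A.card = (insert l (A.erase i)).card := h1.symm
          _ ≤ (A.biUnion T).card := Finset.card_le_card hsub
    · have hsub : A ⊆ A.biUnion T := by
        intro a ha
        refine Finset.mem_biUnion.mpr ⟨a, ha, hTself a ?_⟩
        rintro rfl; exact hiA ha
      exact Finset.card_le_card hsub
  obtain ⟨f, hfinj, hfT⟩ := (Finset.all_card_le_biUnion_card_iff_exists_injective T).mp hall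
  refine ⟨f, Finite.injective_iff_bijective.mp hfinj, ?_, ?_⟩
  · have := hfT i; simpa [hT] using this
  · intro a
    by_cases ha : a = i
    · subst ha
      have : f a = l := by have := hfT a; simpa [hT] using this
      rw [this]; exact ⟨hscc, Or.inl hE⟩
    · have := hfT a
      simp only [hT, if_neg ha, Finset.mem_filter] at this
      exact this.2


variable (v x)


noncomputable def egF : Finset (Fin n → Fin n) :=
  Finset.univ.filter (fun f => Function.Bijective f ∧ ∀ a, egNbK v x a (f a))

noncomputable def egQ (i l : Fin n) : ℝ :=
  ((egF v x).card : ℝ)⁻¹ * ∑ f ∈ egF v x, (if f i = l then 1 else 0)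

noncomputable def egCls (i : Fin n) : Finset (Fin n) := Finset.univ.filter (egSim v x i)

noncomputable def egM (i l : Fin n) : ℝ :=
  ∑ i' ∈ egCls v x i, ((egCls v x i).card : ℝ)⁻¹ * egQ v x i' l

variable {v x}

lemma egF_mem {f : Fin n → Fin n} :
    f ∈ egF v x ↔ Function.Bijective f ∧ ∀ a, egNbK v x a (f a) := by
  simp [egF]

lemma egF_nonempty : (egF v x).Nonempty :=
  ⟨id, egF_mem.mpr ⟨Function.bijective_id, fun a => egNbK_refl a⟩⟩

lemma egF_card_pos : (0:ℝ) < (egF v x).card := by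
  exact_mod_cast Finset.card_pos.mpr egF_nonempty

lemma egQ_nonneg (i l : Fin n) : 0 ≤ egQ v x i l := by
  unfold egQ
  apply mul_nonneg (by positivity)
  apply Finset.sum_nonneg
  intro f _
  by_cases h : f i = l <;> simp [h]

lemma egQ_rowsum (i : Fin n) : ∑ l, egQ v x i l = 1 := by
  unfold egQ
  rw [← Finset.mul_sum, Finset.sum_comm]
  have : ∀ f ∈ egF v x, (∑ l, if f i = l then (1:ℝ) else 0) = 1 := by
    intro f _
    rw [Finset.sum_ite_eq]
    simp
  rw [Finset.sum_congr rfl this, Finset.sum_const, nsmul_eq_mul, mul_one,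
    inv_mul_cancel₀ (ne_of_gt egF_card_pos)]

lemma egQ_colsum (l : Fin n) : ∑ i, egQ v x i l = 1 := by
  unfold egQ
  rw [← Finset.mul_sum, Finset.sum_comm]
  have : ∀ f ∈ egF v x, (∑ i, if f i = l then (1:ℝ) else 0) = 1 := by
    intro f hf
    have hbij : Function.Bijective f := (egF_mem.mp hf).1
    obtain ⟨i₀, hi₀⟩ := hbij.surjective l
    have : ∀ i, (if f i = l then (1:ℝ) else 0) = if i = i₀ then 1 else 0 := by
      intro i
      by_cases h : i = i₀
      · subst h; simp [hi₀]
      · have : f i ≠ l := fun hc => h (hbij.injective (hc.trans hi₀.symm))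
        simp [h, this]
    rw [Finset.sum_congr rfl (fun i _ => this i), Finset.sum_ite_eq']
    simp
  rw [Finset.sum_congr rfl this, Finset.sum_const, nsmul_eq_mul, mul_one,
    inv_mul_cancel₀ (ne_of_gt egF_card_pos)]

lemma egQ_pos_of_mem {i l : Fin n} {f : Fin n → Fin n} (hf : f ∈ egF v x)
    (hfl : f i = l) : 0 < egQ v x i l := by
  unfold egQ
  apply mul_pos (inv_pos.mpr egF_card_pos)
  have h1 : (1:ℝ) ≤ ∑ g ∈ egF v x, (if g i = l then 1 else 0) := by
    have := Finset.single_le_sum (f := fun g : Fin n → Fin n => if g i = l then (1:ℝ) else 0)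
      (fun g _ => by by_cases h : g i = l <;> simp [h]) hf
    simpa [hfl] using this
  linarith

lemma egQ_pos_diag (i : Fin n) : 0 < egQ v x i i :=
  egQ_pos_of_mem (f := id) (egF_mem.mpr ⟨Function.bijective_id, fun a => egNbK_refl a⟩) rfl

lemma egQ_pos_edge {i l : Fin n} (hE : IndifEdge v x i l) (hscc : egScc v x i l) :
    0 < egQ v x i l := by
  obtain ⟨f, hbij, hfl, hpat⟩ := egExistsBij hE hscc
  exact egQ_pos_of_mem (egF_mem.mpr ⟨hbij, hpat⟩) hfl

lemma egQ_supp {i l : Fin n} (h : 0 < egQ v x i l) : egNbK v x i l := by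
  by_contra hn
  have : ∑ f ∈ egF v x, (if f i = l then (1:ℝ) else 0) = 0 := by
    apply Finset.sum_eq_zero
    intro f hf
    rw [if_neg]
    intro hfl
    exact hn (hfl ▸ (egF_mem.mp hf).2 i)
  rw [egQ, this, mul_zero] at h
  exact lt_irrefl 0 h

lemma egCls_self (i : Fin n) : i ∈ egCls v x i :=
  Finset.mem_filter.mpr ⟨Finset.mem_univ _, egSim_refl i⟩

lemma egCls_mem {i j : Fin n} : j ∈ egCls v x i ↔ egSim v x i j := by
  simp [egCls]

lemma egCls_nonempty (i : Fin n) : (egCls v x i).Nonempty := ⟨i, egCls_self i⟩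

lemma egCls_card_pos (i : Fin n) : (0:ℝ) < (egCls v x i).card := by
  exact_mod_cast Finset.card_pos.mpr (egCls_nonempty i)

lemma egCls_eq {i j : Fin n} (h : egSim v x i j) : egCls v x i = egCls v x j := by
  ext a
  simp only [egCls_mem]
  exact ⟨fun h' => egSim_trans (egSim_symm h) h', fun h' => egSim_trans h h'⟩

lemma egM_nonneg (i l : Fin n) : 0 ≤ egM v x i l :=
  Finset.sum_nonneg fun i' _ => mul_nonneg (by positivity) (egQ_nonneg i' l)

lemma egM_rowsum (i : Fin n) : ∑ l, egM v x i l = 1 := by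
  unfold egM
  rw [Finset.sum_comm]
  have : ∀ i' ∈ egCls v x i, ∑ l, ((egCls v x i).card : ℝ)⁻¹ * egQ v x i' l
      = ((egCls v x i).card : ℝ)⁻¹ := by
    intro i' _
    rw [← Finset.mul_sum, egQ_rowsum, mul_one]
  rw [Finset.sum_congr rfl this, Finset.sum_const, nsmul_eq_mul,
    mul_inv_cancel₀ (ne_of_gt (egCls_card_pos i))]

lemma egM_colsum (l : Fin n) : ∑ i, egM v x i l = 1 := by
  have hM : ∀ i, egM v x i l
      = ∑ i', if egSim v x i i' then ((egCls v x i).card : ℝ)⁻¹ * egQ v x i' l else 0 := by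
    intro i
    rw [egM]
    unfold egCls
    rw [Finset.sum_filter]
  have hinner : ∀ i', (∑ i, if egSim v x i i' then ((egCls v x i).card : ℝ)⁻¹ else 0) = 1 := by
    intro i'
    have hpt : ∀ i, (if egSim v x i i' then ((egCls v x i).card : ℝ)⁻¹ else 0)
        = if egSim v x i' i then ((egCls v x i').card : ℝ)⁻¹ else 0 := by
      intro i
      by_cases h : egSim v x i i'
      · rw [if_pos h, if_pos (egSim_symm h), egCls_eq h]
      · rw [if_neg h, if_neg (fun h' => h (egSim_symm h'))]
    rw [Finset.sum_congr rfl (fun i _ => hpt i), ← Finset.sum_filter]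
    have : Finset.univ.filter (egSim v x i') = egCls v x i' := rfl
    rw [this, Finset.sum_const, nsmul_eq_mul,
      mul_inv_cancel₀ (ne_of_gt (egCls_card_pos i'))]
  calc ∑ i, egM v x i l
      = ∑ i', (∑ i, if egSim v x i i' then ((egCls v x i).card : ℝ)⁻¹ else 0) * egQ v x i' l := by
        rw [Finset.sum_congr rfl (fun i _ => hM i), Finset.sum_comm]
        apply Finset.sum_congr rfl
        intro i' _
        rw [Finset.sum_mul]
        apply Finset.sum_congr rfl
        intro i _
        by_cases h : egSim v x i i' <;> simp [h]
    _ = ∑ i', egQ v x i' l := by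
        apply Finset.sum_congr rfl
        intro i' _
        rw [hinner i', one_mul]
    _ = 1 := egQ_colsum l

lemma egM_single_le {i l i' : Fin n} (h : i' ∈ egCls v x i) :
    ((egCls v x i).card : ℝ)⁻¹ * egQ v x i' l ≤ egM v x i l :=
  Finset.single_le_sum (fun a _ => mul_nonneg (by positivity) (egQ_nonneg a l)) h

lemma egM_pos_diag (i : Fin n) : 0 < egM v x i i :=
  lt_of_lt_of_le (mul_pos (inv_pos.mpr (egCls_card_pos i)) (egQ_pos_diag i))
    (egM_single_le (egCls_self i))

lemma egM_pos_edge {i l : Fin n} (hE : IndifEdge v x i l) (hscc : egScc v x i l) :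
    0 < egM v x i l :=
  lt_of_lt_of_le (mul_pos (inv_pos.mpr (egCls_card_pos i)) (egQ_pos_edge hE hscc))
    (egM_single_le (egCls_self i))

lemma egM_supp {i l : Fin n} (h : 0 < egM v x i l) : egNbK v x i l := by
  obtain ⟨i', hi', hne⟩ := Finset.exists_ne_zero_of_sum_ne_zero (ne_of_gt h)
  have hQ : 0 < egQ v x i' l := by
    rcases lt_or_eq_of_le (egQ_nonneg i' l) with h' | h'
    · exact h'
    · exact absurd (by rw [← h', mul_zero]) hne
  have hsim : egSim v x i i' := egCls_mem.mp hi'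
  exact (hsim.2 l).mpr (egQ_supp hQ)

lemma egM_congr {i j : Fin n} (h : egSim v x i j) : egM v x i = egM v x j := by
  funext l
  unfold egM
  rw [egCls_eq h]

end EGAux

set_option maxHeartbeats 1000000 in
open Fin.NatCast in
/-- Lemma 4.4: given an envy-free Eisenberg–Gale solution `(x, p)` with budgets `e` and
a weakly connected component `S` of `I(x)` on which all budgets are equal, there is a
new allocation `x'`, agreeing with `x` outside `S`, such that `(x', p)` still solves
the Eisenberg–Gale program with budgets `e`, `x'` is envy-free, no new indifference
edges are created, the restriction of `I(x')` to `S` is clique acyclic, and agents of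
`S` in the same clique of the witnessing partition have identical bundles. -/
theorem EG_component_clique_acyclic (n m : ℕ) (v : Fin n → Fin m → ℝ)
    (hv : ∀ i k, 0 ≤ v i k)
    (e : Fin n → ℝ) (p : Fin m → ℝ) (x : Fin n → Fin m → ℝ)
    (hEG : EGSolution v e p x) (hEF : EnvyFree v x)
    (S : Set (Fin n)) (hS : IsWCC v x S)
    (hbudget : ∀ i ∈ S, ∀ j ∈ S, e i = e j) :
    ∃ x' : Fin n → Fin m → ℝ,
      (∀ i ∉ S, x' i = x i) ∧
      EGSolution v e p x' ∧
      EnvyFree v x' ∧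
      (∀ i j, IndifEdge v x' i j → IndifEdge v x i j) ∧
      ∃ c : Fin n → ℕ,
        CliqueAcyclicOn (IndifEdge v x') S c ∧
        (∀ i ∈ S, ∀ j ∈ S, c i = c j → x' i = x' j) := by
  classical
  obtain ⟨he, hp, hx, hval, hsum, hkkt2, hkkt3⟩ := hEG
  obtain ⟨i₀, hSdef⟩ := hS
  have hx01 : ∀ i k, 0 ≤ x i k ∧ x i k ≤ 1 := fun i k => Set.mem_Icc.mp (hx.1 i k)
  have hmemS : ∀ j, j ∈ S ↔ Relation.ReflTransGen (UndirStep v x) i₀ j := by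
    intro j; rw [hSdef]; exact Iff.rfl
  have hSstep : ∀ i j, i ∈ S → UndirStep v x i j → j ∈ S := by
    intro i j hi h
    exact (hmemS j).mpr (((hmemS i).mp hi).tail h)
  have hS1 : ∀ {i j}, i ∈ S → IndifEdge v x i j → j ∈ S :=
    fun {i j} hi h => hSstep i j hi (Or.inl h)
  have hS2 : ∀ {i j}, j ∈ S → IndifEdge v x i j → i ∈ S :=
    fun {i j} hj h => hSstep j i hj (Or.inr h)
  set r : Fin n → ℝ := fun i => val v i (x i) / e i with hrdef
  have hr_apply : ∀ i, r i = val v i (x i) / e i := fun _ => rfl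
  have hr_pos : ∀ i, 0 < r i := fun i => div_pos (hval i) (he i)
  have hre : ∀ i, r i * e i = val v i (x i) := fun i => div_mul_cancel₀ _ (ne_of_gt (he i))
  have hvle : ∀ i k, v i k ≤ r i * p k := fun i k => (div_le_iff₀ (hp k)).mp (hkkt2 i k)
  have hveq : ∀ l k, v l k * x l k = r l * (p k * x l k) := by
    intro l k
    rcases eq_or_lt_of_le (hx01 l k).1 with h0 | hpos
    · rw [← h0]; ring
    · have h3 := hkkt3 l k hpos
      rw [← hr_apply l] at h3
      have h4 : v l k = r l * p k := by
        rw [← h3, div_mul_cancel₀ _ (ne_of_gt (hp k))]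
      rw [h4]; ring
  have hspend : ∀ l, ∑ k, p k * x l k = e l := by
    intro l
    have h1 : val v l (x l) = r l * ∑ k, p k * x l k := by
      rw [Finset.mul_sum]
      exact Finset.sum_congr rfl fun k _ => hveq l k
    have h2 : r l * (∑ k, p k * x l k) = r l * e l := by
      rw [← h1, hre]
    exact mul_left_cancel₀ (ne_of_gt (hr_pos l)) h2
  have hedge_mbb : ∀ {i l : Fin n}, i ∈ S → IndifEdge v x i l →
      ∀ k, 0 < x l k → v i k = r i * p k := by
    intro i l hi hE
    have hE' : i ≠ l ∧ val v i (x i) = val v i (x l) := hE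
    have hlS : l ∈ S := hS1 hi hE
    have hel : e l = e i := hbudget l hlS i hi
    have hsum0 : ∑ k, (r i * p k - v i k) * x l k = 0 := by
      have hexp : ∑ k, (r i * p k - v i k) * x l k
          = r i * (∑ k, p k * x l k) - val v i (x l) := by
        rw [val_apply, Finset.mul_sum, ← Finset.sum_sub_distrib]
        exact Finset.sum_congr rfl fun k _ => by ring
      rw [hexp, hspend l, hel, ← hE'.2, hre i, sub_self]
    intro k hk
    have hnn : ∀ k, k ∈ Finset.univ → 0 ≤ (r i * p k - v i k) * x l k :=
      fun k _ => mul_nonneg (sub_nonneg.mpr (hvle i k)) (hx01 l k).1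
    have hterm := (Finset.sum_eq_zero_iff_of_nonneg hnn).mp hsum0 k (Finset.mem_univ k)
    rcases mul_eq_zero.mp hterm with h | h
    · exact (sub_eq_zero.mp h).symm
    · exact absurd h (ne_of_gt hk)
  set x' : Fin n → Fin m → ℝ :=
    fun i k => if i ∈ S then ∑ l, egM v x i l * x l k else x i k with hx'def
  have hx'_out : ∀ i, i ∉ S → x' i = x i := by
    intro i hi; funext k; simp only [hx'def, if_neg hi]
  have hx'_in : ∀ i, i ∈ S → ∀ k, x' i k = ∑ l, egM v x i l * x l k := by
    intro i hi k; simp only [hx'def, if_pos hi]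
  have hM_S : ∀ {i l}, i ∈ S → 0 < egM v x i l → l = i ∨ (IndifEdge v x i l ∧ l ∈ S) := by
    intro i l hi hM
    rcases (egM_supp hM).2 with hE | h
    · exact Or.inr ⟨hE, hS1 hi hE⟩
    · exact Or.inl h
  have hM_colS : ∀ {i l}, l ∈ S → 0 < egM v x i l → i ∈ S := by
    intro i l hl hM
    rcases (egM_supp hM).2 with hE | h
    · exact hS2 hl hE
    · rw [← h]; exact hl
  have hMval : ∀ {i l}, i ∈ S → 0 < egM v x i l → val v i (x l) = val v i (x i) := by
    intro i l hi hM
    rcases hM_S hi hM with h | ⟨hE, _⟩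
    · rw [h]
    · have hE' : i ≠ l ∧ val v i (x i) = val v i (x l) := hE
      exact hE'.2.symm
  have hval_mix : ∀ a j, j ∈ S → val v a (x' j) = ∑ l, egM v x j l * val v a (x l) := by
    intro a j hj
    rw [val_apply]
    calc ∑ k, v a k * x' j k = ∑ k, ∑ l, egM v x j l * (v a k * x l k) := by
          apply Finset.sum_congr rfl
          intro k _
          rw [hx'_in j hj k, Finset.mul_sum]
          apply Finset.sum_congr rfl
          intro l _
          ring
      _ = ∑ l, egM v x j l * val v a (x l) := by
          rw [Finset.sum_comm]
          apply Finset.sum_congr rfl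
          intro l _
          rw [val_apply, Finset.mul_sum]
  have hval_pres : ∀ i, val v i (x' i) = val v i (x i) := by
    intro i
    by_cases hi : i ∈ S
    · rw [hval_mix i i hi]
      have hpt : ∀ l, egM v x i l * val v i (x l) = egM v x i l * val v i (x i) := by
        intro l
        rcases eq_or_lt_of_le (egM_nonneg (v := v) (x := x) i l) with h0 | hpos
        · rw [← h0]; ring
        · rw [hMval hi hpos]
      rw [Finset.sum_congr rfl (fun l _ => hpt l), ← Finset.sum_mul, egM_rowsum, one_mul]
    · rw [hx'_out i hi]
  have hEF' : EnvyFree v x' := by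
    intro a j
    rw [hval_pres a]
    by_cases hj : j ∈ S
    · rw [hval_mix a j hj]
      calc ∑ l, egM v x j l * val v a (x l) ≤ ∑ l, egM v x j l * val v a (x a) := by
            apply Finset.sum_le_sum
            intro l _
            exact mul_le_mul_of_nonneg_left (hEF a l) (egM_nonneg j l)
        _ = val v a (x a) := by rw [← Finset.sum_mul, egM_rowsum, one_mul]
    · rw [hx'_out j hj]; exact hEF a j
  have hkey : ∀ a j, j ∈ S → val v a (x' j) = val v a (x a) →
      ∀ l, 0 < egM v x j l → val v a (x l) = val v a (x a) := by
    intro a j hj heq l hMl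
    have h0 : ∑ l, egM v x j l * (val v a (x a) - val v a (x l)) = 0 := by
      have hexp : ∑ l, egM v x j l * (val v a (x a) - val v a (x l))
          = (∑ l, egM v x j l) * val v a (x a) - ∑ l, egM v x j l * val v a (x l) := by
        rw [Finset.sum_mul, ← Finset.sum_sub_distrib]
        exact Finset.sum_congr rfl fun l _ => by ring
      rw [hexp, egM_rowsum, one_mul, ← hval_mix a j hj, heq, sub_self]
    have hnn : ∀ l, l ∈ Finset.univ → 0 ≤ egM v x j l * (val v a (x a) - val v a (x l)) :=
      fun l _ => mul_nonneg (egM_nonneg j l) (sub_nonneg.mpr (hEF a l))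
    have hterm := (Finset.sum_eq_zero_iff_of_nonneg hnn).mp h0 l (Finset.mem_univ l)
    rcases mul_eq_zero.mp hterm with h | h
    · exact absurd h (ne_of_gt hMl)
    · exact (sub_eq_zero.mp h).symm
  have hnonew : ∀ a j, IndifEdge v x' a j → IndifEdge v x a j := by
    intro a j h
    have h' : a ≠ j ∧ val v a (x' a) = val v a (x' j) := h
    refine ⟨h'.1, ?_⟩
    by_cases hj : j ∈ S
    · have h1 : val v a (x' j) = val v a (x a) := by rw [← h'.2, hval_pres]
      exact (hkey a j hj h1 j (egM_pos_diag j)).symm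
    · have h2 := h'.2
      rw [hx'_out j hj, hval_pres] at h2
      exact h2
  -- column sums
  have hMzero_out : ∀ i l, l ∈ S → i ∉ S → egM v x i l = 0 := by
    intro i l hl hi
    rcases eq_or_lt_of_le (egM_nonneg (v := v) (x := x) i l) with h0 | hpos
    · exact h0.symm
    · exact absurd (hM_colS hl hpos) hi
  have hMzero_in : ∀ i l, i ∈ S → l ∉ S → egM v x i l = 0 := by
    intro i l hi hl
    rcases eq_or_lt_of_le (egM_nonneg (v := v) (x := x) i l) with h0 | hpos
    · exact h0.symm
    · rcases hM_S hi hpos with h | ⟨_, hlS⟩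
      · rw [h] at hl; exact absurd hi hl
      · exact absurd hlS hl
  have hcolM : ∀ l, (∑ i ∈ Finset.univ.filter (· ∈ S), egM v x i l)
      = if l ∈ S then 1 else 0 := by
    intro l
    by_cases hl : l ∈ S
    · rw [if_pos hl]
      have h1 := egM_colsum (v := v) (x := x) l
      rw [← Finset.sum_filter_add_sum_filter_not Finset.univ (· ∈ S)
        (fun i => egM v x i l)] at h1
      have h2 : (∑ i ∈ Finset.univ.filter (fun i => ¬ i ∈ S), egM v x i l) = 0 :=
        Finset.sum_eq_zero fun i hi => hMzero_out i l hl (Finset.mem_filter.mp hi).2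
      rw [h2, add_zero] at h1
      exact h1
    · rw [if_neg hl]
      exact Finset.sum_eq_zero fun i hi => hMzero_in i l (Finset.mem_filter.mp hi).2 hl
  have hcolsum' : ∀ k, ∑ i, x' i k = 1 := by
    intro k
    calc ∑ i, x' i k
        = (∑ i ∈ Finset.univ.filter (· ∈ S), x' i k)
          + ∑ i ∈ Finset.univ.filter (fun i => ¬ i ∈ S), x' i k :=
          (Finset.sum_filter_add_sum_filter_not _ _ _).symm
      _ = (∑ l, (∑ i ∈ Finset.univ.filter (· ∈ S), egM v x i l) * x l k)
          + ∑ i ∈ Finset.univ.filter (fun i => ¬ i ∈ S), x i k := by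
          congr 1
          · rw [Finset.sum_congr rfl
              (fun i hi => hx'_in i (Finset.mem_filter.mp hi).2 k), Finset.sum_comm]
            apply Finset.sum_congr rfl
            intro l _
            rw [Finset.sum_mul]
          · exact Finset.sum_congr rfl fun i hi => congrFun
              (hx'_out i (Finset.mem_filter.mp hi).2) k
      _ = (∑ l, (if l ∈ S then x l k else 0))
          + ∑ i ∈ Finset.univ.filter (fun i => ¬ i ∈ S), x i k := by
          congr 1
          apply Finset.sum_congr rfl
          intro l _
          rw [hcolM l]
          by_cases hl : l ∈ S <;> simp [hl]
      _ = (∑ l ∈ Finset.univ.filter (· ∈ S), x l k)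
          + ∑ i ∈ Finset.univ.filter (fun i => ¬ i ∈ S), x i k := by
          congr 1
          rw [Finset.sum_filter]
      _ = ∑ i, x i k := Finset.sum_filter_add_sum_filter_not _ _ _
      _ = 1 := hsum k
  have hx'_nonneg : ∀ i k, 0 ≤ x' i k := by
    intro i k
    by_cases hi : i ∈ S
    · rw [hx'_in i hi k]
      exact Finset.sum_nonneg fun l _ => mul_nonneg (egM_nonneg i l) (hx01 l k).1
    · rw [congrFun (hx'_out i hi) k]; exact (hx01 i k).1
  have hx'_le : ∀ i k, x' i k ≤ 1 := by
    intro i k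
    have h1 : x' i k ≤ ∑ i', x' i' k :=
      Finset.single_le_sum (fun i' _ => hx'_nonneg i' k) (Finset.mem_univ i)
    rw [hcolsum' k] at h1; exact h1
  have hEG2 : EGSolution v e p x' := by
    refine ⟨he, hp, ⟨fun i k => Set.mem_Icc.mpr ⟨hx'_nonneg i k, hx'_le i k⟩, hcolsum'⟩,
      ?_, hcolsum', ?_, ?_⟩
    · intro i; rw [hval_pres]; exact hval i
    · intro i k; rw [hval_pres]; exact hkkt2 i k
    · intro i k hpos
      rw [hval_pres]
      by_cases hi : i ∈ S
      · rw [hx'_in i hi k] at hpos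
        obtain ⟨l, _, hne⟩ := Finset.exists_ne_zero_of_sum_ne_zero (ne_of_gt hpos)
        have hMl : 0 < egM v x i l := by
          rcases eq_or_lt_of_le (egM_nonneg (v := v) (x := x) i l) with h0 | h'
          · exact absurd (by rw [← h0, zero_mul]) hne
          · exact h'
        have hxl : 0 < x l k := by
          rcases eq_or_lt_of_le (hx01 l k).1 with h0 | h'
          · exact absurd (by rw [← h0, mul_zero]) hne
          · exact h'
        rcases hM_S hi hMl with h | ⟨hE, _⟩
        · rw [h] at hxl
          exact hkkt3 i k hxl
        · have h4 : v i k = r i * p k := hedge_mbb hi hE k hxl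
          rw [← hr_apply i, h4, mul_div_assoc, div_self (ne_of_gt (hp k)), mul_one]
      · have h5 : x' i k = x i k := congrFun (hx'_out i hi) k
        rw [h5] at hpos
        exact hkkt3 i k hpos
  set c : Fin n → ℕ := fun i => ((egCls v x i).min' (egCls_nonempty i)).val with hcdef
  have hc_sim : ∀ i j, c i = c j → egSim v x i j := by
    intro i j h
    simp only [hcdef] at h
    have h1 : (egCls v x i).min' (egCls_nonempty i) = (egCls v x j).min' (egCls_nonempty j) :=
      Fin.val_injective h
    have ha := Finset.min'_mem (egCls v x i) (egCls_nonempty i)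
    have hb := Finset.min'_mem (egCls v x j) (egCls_nonempty j)
    rw [h1] at ha
    exact egSim_trans (egCls_mem.mp ha) (egSim_symm (egCls_mem.mp hb))
  have hc_of_sim : ∀ i j, egSim v x i j → c i = c j := by
    intro i j h
    simp only [hcdef]
    have hcl : egCls v x i = egCls v x j := egCls_eq h
    simp only [hcl]
  have hbundle_eq : ∀ i, i ∈ S → ∀ j, j ∈ S → c i = c j → x' i = x' j := by
    intro i hi j hj h
    have hsim := hc_sim i j h
    funext k
    rw [hx'_in i hi k, hx'_in j hj k, egM_congr hsim]
  refine ⟨x', fun i hi => hx'_out i hi, hEG2, hEF', hnonew, c, ⟨?_, ?_⟩,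
    fun i hi j hj h => hbundle_eq i hi j hj h⟩
  · intro i hi j hj hne hcij
    exact ⟨hne, by rw [hbundle_eq i hi j hj hcij]⟩
  · intro k cyc hcS hcE t t'
    have hold : ∀ t, IndifEdge v x (cyc t) (cyc (t+1)) := fun t => hnonew _ _ (hcE t)
    have hreach_s : ∀ (s : ℕ) (t : Fin (k+1)),
        egReach v x (cyc t) (cyc (t + (s : Fin (k+1)))) := by
      intro s
      induction s with
      | zero =>
        intro t
        simp only [Nat.cast_zero, add_zero]
        exact Relation.ReflTransGen.refl
      | succ s ih =>
        intro t
        have hcast : ((s+1 : ℕ) : Fin (k+1)) = (s : Fin (k+1)) + 1 := by push_cast; ring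
        rw [hcast, ← add_assoc]
        exact (ih t).tail (hold (t + (s : Fin (k+1))))
    have hreach : ∀ t t' : Fin (k+1), egReach v x (cyc t) (cyc t') := by
      intro t t'
      have h1 := hreach_s (t' - t).val t
      have h2 : t + (((t' - t).val : ℕ) : Fin (k+1)) = t' := by
        rw [Fin.cast_val_eq_self]; abel
      rwa [h2] at h1
    have hsccc : ∀ t t' : Fin (k+1), egScc v x (cyc t) (cyc t') :=
      fun t t' => ⟨hreach t t', hreach t' t⟩
    have hstep : ∀ (t : Fin (k+1)) (l : Fin n),
        egNbK v x (cyc (t+1)) l → egNbK v x (cyc t) l := by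
      intro t l hNb
      have hMpos : 0 < egM v x (cyc (t+1)) l := by
        rcases hNb.2 with hE | h
        · exact egM_pos_edge hE hNb.1
        · rw [h]; exact egM_pos_diag _
      have hcE' : cyc t ≠ cyc (t+1) ∧ val v (cyc t) (x' (cyc t)) = val v (cyc t) (x' (cyc (t+1))) :=
        hcE t
      have hval_eq : val v (cyc t) (x l) = val v (cyc t) (x (cyc t)) := by
        apply hkey (cyc t) (cyc (t+1)) (hcS (t+1)) _ l hMpos
        rw [← hcE'.2, hval_pres]
      refine ⟨egScc_trans (hsccc t (t+1)) hNb.1, ?_⟩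
      by_cases hl : l = cyc t
      · exact Or.inr hl
      · exact Or.inl ⟨fun h => hl h.symm, hval_eq.symm⟩
    have hstep_s : ∀ (s : ℕ) (t : Fin (k+1)) (l : Fin n),
        egNbK v x (cyc (t + (s : Fin (k+1)))) l → egNbK v x (cyc t) l := by
      intro s
      induction s with
      | zero =>
        intro t l h
        simp only [Nat.cast_zero, add_zero] at h
        exact h
      | succ s ih =>
        intro t l h
        have hcast : ((s+1 : ℕ) : Fin (k+1)) = (s : Fin (k+1)) + 1 := by push_cast; ring
        rw [hcast, ← add_assoc] at h
        exact ih t l (hstep (t + (s : Fin (k+1))) l h)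
    have hmono : ∀ (a b : Fin (k+1)) (l : Fin n), egNbK v x (cyc a) l → egNbK v x (cyc b) l := by
      intro a b l h
      have h2 : b + (((a - b).val : ℕ) : Fin (k+1)) = a := by
        rw [Fin.cast_val_eq_self]; abel
      apply hstep_s (a - b).val b l
      rwa [h2]
    exact hc_of_sim _ _ ⟨hsccc t t', fun l => ⟨hmono t t' l, hmono t' t l⟩⟩
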